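/- Let f be real analytic in a neighborhood of the origin in ℝⁿ (n ≥ 2) with f(0) = 0 and f not identically zero. Then there is a neighborhood U of 0 such that ∫_U |∇f/f|ⁿ dV = ∞; in fact this holds for every sufficiently small ball centered at 0. -/

import Mathlib

open MeasureTheory Set Metric Filter

lemma measurable_indicator_of_continuousOn {X : Type*} [TopologicalSpace X] [MeasurableSpace X]
    [OpensMeasurableSpace X] {s : Set X} (hs : IsOpen s) {g : X → ENNReal}
    (hg : ContinuousOn g s) : Measurable (s.indicator g) := by
  classical
  apply measurable_of_isOpen
  intro U hU
  have h1 : s.indicator g ⁻¹' U = (s ∩ g ⁻¹' U) ∪ (if (0:ENNReal) ∈ U then sᶜ else ∅) := by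
    ext x
    by_cases hx : x ∈ s <;> by_cases h0 : (0:ENNReal) ∈ U <;>
      simp [Set.indicator_of_mem, Set.indicator_of_notMem, hx, h0]
  rw [h1]
  refine ((hg.isOpen_inter_preimage hs hU).measurableSet).union ?_
  split_ifs
  · exact hs.measurableSet.compl
  · exact MeasurableSet.empty

lemma lintegral_inv_Ioo_top {δ : ℝ} (hδ : 0 < δ) {c : ℝ} (hc : 0 < c) :
    ∫⁻ ρ in Ioo (0:ℝ) δ, ENNReal.ofReal (c * ρ⁻¹) = ⊤ := by
  by_contra h
  have hmeas : Measurable fun ρ:ℝ => c * ρ⁻¹ := measurable_const.mul measurable_inv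
  have hInt : IntegrableOn (fun ρ:ℝ => c * ρ⁻¹) (Ioo 0 δ) := by
    refine ⟨hmeas.aestronglyMeasurable, ?_⟩
    rw [hasFiniteIntegral_iff_norm]
    have heq : ∀ᵐ ρ ∂(volume.restrict (Ioo (0:ℝ) δ)),
        ENNReal.ofReal ‖c * ρ⁻¹‖ = ENNReal.ofReal (c * ρ⁻¹) := by
      filter_upwards [ae_restrict_mem measurableSet_Ioo] with ρ hρ
      have : (0:ℝ) ≤ c * ρ⁻¹ := mul_nonneg hc.le (inv_nonneg.2 hρ.1.le)
      rw [Real.norm_eq_abs, abs_of_nonneg this]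
    rw [lintegral_congr_ae heq]
    exact lt_top_iff_ne_top.2 h
  have hInt2 : IntegrableOn (fun ρ:ℝ => ρ ^ (-1:ℝ)) (Ioo 0 δ) := by
    have h2 : IntegrableOn (fun ρ:ℝ => c⁻¹ * (c * ρ⁻¹)) (Ioo 0 δ) := hInt.const_mul c⁻¹
    refine (h2.congr_fun ?_ measurableSet_Ioo)
    intro ρ hρ
    simp only []
    rw [Real.rpow_neg hρ.1.le, Real.rpow_one]
    field_simp
  rw [intervalIntegral.integrableOn_Ioo_rpow_iff hδ] at hInt2
  exact lt_irrefl _ hInt2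

lemma aux_main (n : ℕ) (hn : 2 ≤ n) {E : Type*} [NormedAddCommGroup E]
    [InnerProductSpace ℝ E] [MeasurableSpace E] [BorelSpace E] [FiniteDimensional ℝ E]
    (hdim : Module.finrank ℝ E = n)
    (μ : Measure E) [μ.IsAddHaarMeasure]
    (f : E → ℝ) (V : Set E) (hV : IsOpen V) (h0V : (0:E) ∈ V)
    (hf : AnalyticOnNhd ℝ f V) (hf0 : f 0 = 0)
    (hfne : ¬ ∀ᶠ x in nhds (0 : E), f x = 0) :
    ∃ R > (0 : ℝ), ∀ r : ℝ, 0 < r → r < R →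
      ¬ IntegrableOn (fun x => (‖gradient f x‖ / |f x|) ^ (n : ℝ))
        (ball (0 : E) r \ {x | f x = 0}) μ := by
  have hntriv : Nontrivial E := by
    have : 0 < Module.finrank ℝ E := by omega
    exact Module.nontrivial_of_finrank_pos this
  obtain ⟨R, hR0, hRV⟩ : ∃ R > (0:ℝ), ball (0:E) R ⊆ V := by
    rcases Metric.isOpen_iff.1 hV 0 h0V with ⟨R, hR0, hR⟩
    exact ⟨R, hR0, hR⟩
  refine ⟨R, hR0, fun r hr0 hrR hcontra => ?_⟩
  set F : E → ℝ := fun x => (‖gradient f x‖ / |f x|) ^ (n : ℝ) with hF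
  have hF0 : ∀ x, 0 ≤ F x := fun x =>
    Real.rpow_nonneg (div_nonneg (norm_nonneg _) (abs_nonneg _)) _
  set O : Set E := V ∩ f ⁻¹' ({(0:ℝ)}ᶜ) with hO
  have hOopen : IsOpen O := hf.continuousOn.isOpen_inter_preimage hV isOpen_compl_singleton
  have hballV : ball (0:E) r ⊆ V := fun x hx => hRV (ball_subset_ball hrR.le hx)
  set U : Set E := ball (0:E) r ∩ O with hUdef
  have hset : ball (0:E) r \ {x | f x = 0} = U := by
    ext x
    simp only [hUdef, mem_diff, mem_setOf_eq, mem_inter_iff, hO, mem_preimage, mem_compl_iff,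
      mem_singleton_iff]
    exact ⟨fun ⟨h1, h2⟩ => ⟨h1, hballV h1, h2⟩, fun ⟨h1, _, h3⟩ => ⟨h1, h3⟩⟩
  have hUopen : IsOpen U := isOpen_ball.inter hOopen
  have hcontra' : IntegrableOn F U μ := by rwa [hset] at hcontra
  -- continuity of F on U
  have hFcont : ContinuousOn F U := by
    have h1 : ContinuousOn (fderiv ℝ f) V := (hf.fderiv).continuousOn
    have h2 : ContinuousOn (fun x => ‖gradient f x‖) V :=
      ((InnerProductSpace.toDual ℝ E).symm.continuous.comp_continuousOn h1).norm
    have h3 : ContinuousOn (fun x => |f x|) V := hf.continuousOn.abs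
    have h4 : ContinuousOn (fun x => ‖gradient f x‖ / |f x|) U := by
      apply ContinuousOn.div
      · exact h2.mono (fun x hx => hx.2.1)
      · exact h3.mono (fun x hx => hx.2.1)
      · intro x hx
        simpa using hx.2.2
    exact h4.rpow_const (fun x hx => Or.inr (Nat.cast_nonneg n))
  set G : E → ENNReal := U.indicator (fun x => ENNReal.ofReal (F x)) with hG
  have hGmeas : Measurable G :=
    measurable_indicator_of_continuousOn hUopen
      (ENNReal.continuous_ofReal.comp_continuousOn hFcont)
  have hGfin : ∫⁻ x, G x ∂μ < ⊤ := by
    rw [hG, lintegral_indicator hUopen.measurableSet]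
    have h5 := hcontra'.2
    rw [hasFiniteIntegral_iff_norm] at h5
    refine lt_of_le_of_lt (le_of_eq ?_) h5
    refine setLIntegral_congr_fun hUopen.measurableSet (fun x hx => ?_)
    rw [Real.norm_eq_abs, abs_of_nonneg (hF0 x)]
  -- polar coordinates
  set ν : Measure (Ioi (0:ℝ)) := Measure.volumeIoiPow (Module.finrank ℝ E - 1) with hν
  set σ : Measure (sphere (0:E) 1) := μ.toSphere with hσ
  set φ := homeomorphUnitSphereProd E with hφ
  have hMP : MeasurePreserving φ (μ.comap (↑)) (σ.prod ν) :=
    μ.measurePreserving_homeomorphUnitSphereProd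
  set G' : sphere (0:E) 1 × Ioi (0:ℝ) → ENNReal := fun p => G ((p.2 : ℝ) • (p.1 : E)) with hG'
  have hG'meas : Measurable G' := by
    apply hGmeas.comp
    exact ((continuous_subtype_val.comp continuous_snd).smul
      (continuous_subtype_val.comp continuous_fst)).measurable
  have hprod_fin : ∫⁻ p, G' p ∂(σ.prod ν) < ⊤ := by
    have h6 : ∫⁻ x : ({0}ᶜ : Set E), G' (φ x) ∂(μ.comap (↑)) = ∫⁻ p, G' p ∂(σ.prod ν) :=
      hMP.lintegral_comp_emb (Homeomorph.measurableEmbedding φ) G'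
    have h7 : ∀ x : ({0}ᶜ : Set E), G' (φ x) = G x := by
      intro x
      have hx0 : (x:E) ≠ 0 := x.2
      simp only [hG', hφ, homeomorphUnitSphereProd_apply_snd_coe,
        homeomorphUnitSphereProd_apply_fst_coe]
      rw [smul_inv_smul₀ (norm_ne_zero_iff.2 hx0)]
    rw [← h6]
    calc ∫⁻ x : ({0}ᶜ : Set E), G' (φ x) ∂(μ.comap (↑))
        = ∫⁻ x : ({0}ᶜ : Set E), G x ∂(μ.comap (↑)) := by
          exact lintegral_congr (fun x => h7 x)
      _ = ∫⁻ x in ({0}ᶜ : Set E), G x ∂μ :=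
          lintegral_subtype_comap (measurableSet_singleton 0).compl _
      _ ≤ ∫⁻ x, G x ∂μ := setLIntegral_le_lintegral _ _
      _ < ⊤ := hGfin
  -- Fubini
  set H : sphere (0:E) 1 → ENNReal := fun ω => ∫⁻ ρ, G' (ω, ρ) ∂ν with hH
  have hfub : ∫⁻ ω, H ω ∂σ < ⊤ := by
    rw [hH, ← lintegral_prod G' hG'meas.aemeasurable]
    exact hprod_fin
  have hHmeas : Measurable H := hG'meas.lintegral_prod_right'
  have hae : ∀ᵐ ω ∂σ, H ω < ⊤ := ae_lt_top hHmeas hfub.ne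
  -- the set of good directions is null
  have hGood : ∀ ω : sphere (0:E) 1, (∃ ρ : ℝ, 0 < ρ ∧ ρ < r ∧ f (ρ • (ω:E)) ≠ 0) →
      H ω = ⊤ := by
    intro ω hω
    obtain ⟨ρ₀, hρ₀0, hρ₀r, hρ₀f⟩ := hω
    have key : ∃ δ > 0, δ ≤ r ∧ ∀ ρ ∈ Ioo (0:ℝ) δ,
        (ρ • (ω:E)) ∈ ball (0:E) r ∧ f (ρ • (ω:E)) ≠ 0 ∧ (ρ • (ω:E)) ∈ V ∧
        ((2*ρ)⁻¹) ^ (n:ℝ) ≤ F (ρ • (ω:E)) := by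
      have hωnorm : ‖(ω:E)‖ = 1 := by
        have := ω.2
        rwa [mem_sphere_zero_iff_norm] at this
      set g : ℝ → ℝ := fun ρ => f (ρ • (ω:E)) with hg
      have hlin : ∀ ρ:ℝ, AnalyticAt ℝ (fun t:ℝ => t • (ω:E)) ρ := by
        intro ρ
        have h1 := ((ContinuousLinearMap.id ℝ ℝ).smulRight (ω:E)).analyticAt ρ
        have h2 : ⇑((ContinuousLinearMap.id ℝ ℝ).smulRight (ω:E)) = fun t:ℝ => t • (ω:E) := by
          ext t; simp
        rwa [h2] at h1
      have hmem : ∀ ρ:ℝ, |ρ| < R → (ρ • (ω:E)) ∈ ball (0:E) R := by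
        intro ρ h
        rw [mem_ball, dist_eq_norm, sub_zero, norm_smul, hωnorm, mul_one, Real.norm_eq_abs]
        exact h
      have hganal : ∀ ρ ∈ ball (0:ℝ) R, AnalyticAt ℝ g ρ := by
        intro ρ hρ
        rw [mem_ball, Real.dist_eq, sub_zero] at hρ
        exact AnalyticAt.comp (g := f) (f := fun t:ℝ => t • (ω:E)) (x := ρ)
          (hf (ρ • (ω:E)) (hRV (hmem ρ hρ))) (hlin ρ)
      have hg0 : g 0 = 0 := by simp [hg, hf0]
      have h_not_ev : ¬ ∀ᶠ ρ in nhds (0:ℝ), g ρ = 0 := by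
        intro hev
        have hEq : EqOn g 0 (ball (0:ℝ) R) :=
          AnalyticOnNhd.eqOn_zero_of_preconnected_of_eventuallyEq_zero
            (fun ρ hρ => hganal ρ hρ) (convex_ball (0:ℝ) R).isPreconnected
            (mem_ball_self hR0) hev
        have : g ρ₀ = 0 := hEq (by rw [mem_ball, Real.dist_eq, sub_zero, abs_of_pos hρ₀0]; linarith)
        exact hρ₀f this
      have hA : AnalyticAt ℝ g 0 := hganal 0 (mem_ball_self hR0)
      have hordne : analyticOrderAt g 0 ≠ ⊤ := by
        intro htop; exact h_not_ev (analyticOrderAt_eq_top.1 htop)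
      obtain ⟨k, hk⟩ : ∃ k : ℕ, analyticOrderAt g 0 = (k : ℕ∞) := by
        cases hord : analyticOrderAt g 0 with
        | top => exact absurd hord hordne
        | coe k => exact ⟨k, rfl⟩
      obtain ⟨h, hh_an, hh0, hev⟩ := (hA.analyticOrderAt_eq_natCast (n := k)).1 hk
      have hev' : ∀ᶠ ρ in nhds (0:ℝ), g ρ = ρ ^ k * h ρ := by
        filter_upwards [hev] with ρ hρ
        simpa [smul_eq_mul] using hρ
      have hk1 : 1 ≤ k := by
        by_contra hcon
        have hk0 : k = 0 := by omega
        have := hev'.self_of_nhds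
        rw [hk0, pow_zero, one_mul, hg0] at this
        exact hh0 this.symm
      -- continuity of deriv h at 0
      have hdc : ContinuousAt (deriv h) 0 := by
        have h1 : ContinuousAt (fderiv ℝ h) 0 := hh_an.fderiv.continuousAt
        have h2 : ContinuousAt (fun ρ => fderiv ℝ h ρ 1) 0 :=
          ((ContinuousLinearMap.apply ℝ ℝ (1:ℝ)).continuous.continuousAt).comp h1
        have h3 : (fun ρ => fderiv ℝ h ρ 1) = deriv h := by
          ext ρ; exact fderiv_apply_one_eq_deriv
        rwa [h3] at h2
      -- the eventual lower bound
      have hq0 : |h 0| / 2 < |(k:ℝ) * h 0 + 0 * deriv h 0| := by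
        rw [zero_mul, add_zero, abs_mul, Nat.abs_cast]
        have : (1:ℝ) ≤ (k:ℝ) := by exact_mod_cast hk1
        have habs : 0 < |h 0| := abs_pos.2 hh0
        nlinarith
      have e4 : ∀ᶠ ρ in nhds (0:ℝ), |h ρ| / 2 < |(k:ℝ) * h ρ + ρ * deriv h ρ| := by
        have hq : ContinuousAt
            (fun ρ => |(k:ℝ) * h ρ + ρ * deriv h ρ| - |h ρ| / 2) 0 := by
          exact (((continuousAt_const.mul hh_an.continuousAt).add
              (continuousAt_id.mul hdc)).abs).sub ((hh_an.continuousAt.abs).div_const 2)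
        have hq0' : (0:ℝ) < |(k:ℝ) * h 0 + 0 * deriv h 0| - |h 0| / 2 := by linarith
        have := hq.eventually (eventually_gt_nhds hq0')
        filter_upwards [this] with ρ hρ
        linarith
      have e1 : ∀ᶠ ρ in nhds (0:ℝ), ∀ᶠ t in nhds ρ, g t = t ^ k * h t :=
        eventually_eventually_nhds.2 hev'
      have e2 : ∀ᶠ ρ in nhds (0:ℝ), AnalyticAt ℝ h ρ := hh_an.eventually_analyticAt
      have e3 : ∀ᶠ ρ in nhds (0:ℝ), h ρ ≠ 0 := hh_an.continuousAt.eventually_ne hh0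
      obtain ⟨ε, hε0, hεP⟩ := Metric.eventually_nhds_iff.1 (((e1.and e2).and e3).and e4)
      refine ⟨min ε r, lt_min hε0 hr0, min_le_right _ _, ?_⟩
      intro ρ hρ
      have hρ0 : 0 < ρ := hρ.1
      have hρε : dist ρ 0 < ε := by
        rw [Real.dist_eq, sub_zero, abs_of_pos hρ0]
        exact hρ.2.trans_le (min_le_left _ _)
      obtain ⟨⟨⟨P1, P2⟩, P3⟩, P4⟩ := hεP hρε
      have hρr : ρ < r := hρ.2.trans_le (min_le_right _ _)
      have hρR : |ρ| < R := by rw [abs_of_pos hρ0]; linarith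
      set x : E := ρ • (ω:E) with hx
      have hxball : x ∈ ball (0:E) r := by
        rw [mem_ball, dist_eq_norm, sub_zero, hx, norm_smul, hωnorm, mul_one, Real.norm_eq_abs,
          abs_of_pos hρ0]
        exact hρr
      have hxV : x ∈ V := hRV (hmem ρ hρR)
      have hgρ : g ρ = ρ ^ k * h ρ := P1.self_of_nhds
      have hfx : f x ≠ 0 := by
        rw [show f x = g ρ from rfl, hgρ]
        exact mul_ne_zero (pow_ne_zero _ hρ0.ne') P3
      refine ⟨hxball, hfx, hxV, ?_⟩
      have hDf := (hf x hxV).differentiableAt.hasFDerivAt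
      have hcurve : HasDerivAt (fun t:ℝ => t • (ω:E)) ((ω:E)) ρ := by
        simpa using (hasDerivAt_id ρ).smul_const (ω:E)
      have hgd : HasDerivAt g (fderiv ℝ f x (ω:E)) ρ := hDf.comp_hasDerivAt ρ hcurve
      have hpoly : HasDerivAt (fun t:ℝ => t ^ k * h t)
          ((k:ℝ) * ρ ^ (k-1) * h ρ + ρ ^ k * deriv h ρ) ρ :=
        (hasDerivAt_pow k ρ).mul P2.differentiableAt.hasDerivAt
      have hgd2 : HasDerivAt g ((k:ℝ) * ρ ^ (k-1) * h ρ + ρ ^ k * deriv h ρ) ρ :=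
        hpoly.congr_of_eventuallyEq P1
      have hder_eq : fderiv ℝ f x (ω:E) = (k:ℝ) * ρ ^ (k-1) * h ρ + ρ ^ k * deriv h ρ :=
        hgd.unique hgd2
      have hρk : ρ ^ k = ρ ^ (k-1) * ρ := by
        rw [← pow_succ]; congr 1; omega
      have hfactor : (k:ℝ) * ρ ^ (k-1) * h ρ + ρ ^ k * deriv h ρ
          = ρ ^ (k-1) * ((k:ℝ) * h ρ + ρ * deriv h ρ) := by rw [hρk]; ring
      have hgradnorm : ‖gradient f x‖ = ‖fderiv ℝ f x‖ := by
        have hgr : gradient f x = (InnerProductSpace.toDual ℝ E).symm (fderiv ℝ f x) := rfl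
        rw [hgr]
        exact LinearIsometryEquiv.norm_map _ _
      have hlb1 : |fderiv ℝ f x (ω:E)| ≤ ‖gradient f x‖ := by
        rw [hgradnorm, ← Real.norm_eq_abs]
        exact (fderiv ℝ f x).unit_le_opNorm (ω:E) (le_of_eq hωnorm)
      have hlb2 : ρ ^ (k-1) * (|h ρ| / 2) ≤ |fderiv ℝ f x (ω:E)| := by
        rw [hder_eq, hfactor, abs_mul, abs_pow, abs_of_pos hρ0]
        exact mul_le_mul_of_nonneg_left P4.le (pow_nonneg hρ0.le _)
      have hfabs : |f x| = ρ ^ (k-1) * ρ * |h ρ| := by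
        rw [show f x = g ρ from rfl, hgρ, abs_mul, abs_pow, abs_of_pos hρ0, hρk]
      have hratio : (2*ρ)⁻¹ ≤ ‖gradient f x‖ / |f x| := by
        rw [le_div_iff₀ (by rw [hfabs]; positivity)]
        calc (2*ρ)⁻¹ * |f x| = ρ ^ (k-1) * (|h ρ| / 2) := by
              rw [hfabs]; field_simp
          _ ≤ |fderiv ℝ f x (ω:E)| := hlb2
          _ ≤ ‖gradient f x‖ := hlb1
      exact Real.rpow_le_rpow (inv_nonneg.2 (by positivity)) hratio (Nat.cast_nonneg n)
    obtain ⟨δ, hδ0, hδr, hδP⟩ := key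
    have hdens : Measurable (fun ρ : Ioi (0:ℝ) => ENNReal.ofReal ((ρ:ℝ)^(n-1))) :=
      (measurable_subtype_coe.pow_const _).ennreal_ofReal
    have hνm : ν = Measure.volumeIoiPow (n-1) := by rw [hν, hdim]
    have hHeq : H ω = ∫⁻ t in Ioi (0:ℝ), ENNReal.ofReal (t^(n-1)) * G (t • (ω:E)) ∂volume := by
      calc H ω = ∫⁻ ρ : Ioi (0:ℝ), G' (ω, ρ) ∂(Measure.volumeIoiPow (n-1)) := by
            rw [hH, hνm]
        _ = ∫⁻ ρ : Ioi (0:ℝ),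
              ENNReal.ofReal ((ρ:ℝ)^(n-1)) * G' (ω, ρ) ∂(volume.comap Subtype.val) := by
            rw [Measure.volumeIoiPow,
              lintegral_withDensity_eq_lintegral_mul_non_measurable _ hdens
                (ae_of_all _ fun ρ => ENNReal.ofReal_lt_top)]
            rfl
        _ = ∫⁻ t in Ioi (0:ℝ), ENNReal.ofReal (t^(n-1)) * G (t • (ω:E)) ∂volume :=
            lintegral_subtype_comap measurableSet_Ioi
              (fun t : ℝ => ENNReal.ofReal (t^(n-1)) * G (t • (ω:E)))
    rw [hHeq, eq_top_iff]
    calc (⊤:ENNReal) = ∫⁻ t in Ioo (0:ℝ) δ, ENNReal.ofReal (((2:ℝ)^n)⁻¹ * t⁻¹) ∂volume :=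
          (lintegral_inv_Ioo_top hδ0 (by positivity)).symm
      _ ≤ ∫⁻ t in Ioo (0:ℝ) δ, ENNReal.ofReal (t^(n-1)) * G (t • (ω:E)) ∂volume := by
          refine setLIntegral_mono' measurableSet_Ioo (fun ρ hρ => ?_)
          obtain ⟨hball', hfne', hV', hFlb⟩ := hδP ρ hρ
          have hρ0 : 0 < ρ := hρ.1
          have hmemU : (ρ • (ω:E)) ∈ U := ⟨hball', hV', by simpa using hfne'⟩
          have hGeq : G (ρ • (ω:E)) = ENNReal.ofReal (F (ρ • (ω:E))) :=
            Set.indicator_of_mem hmemU _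
          have hid : ((2:ℝ)^n)⁻¹ * ρ⁻¹ = ρ^(n-1) * ((2*ρ)⁻¹) ^ (n:ℝ) := by
            rw [Real.rpow_natCast]
            have hρne : ρ ≠ 0 := hρ0.ne'
            have h2 : ρ^n = ρ^(n-1) * ρ := by rw [← pow_succ]; congr 1; omega
            rw [mul_inv, mul_pow, inv_pow, inv_pow, h2]
            field_simp
          rw [hGeq, hid, ENNReal.ofReal_mul (pow_nonneg hρ0.le _)]
          exact mul_le_mul_right (ENNReal.ofReal_le_ofReal hFlb) _
      _ ≤ ∫⁻ t in Ioi (0:ℝ), ENNReal.ofReal (t^(n-1)) * G (t • (ω:E)) ∂volume :=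
          lintegral_mono_set Ioo_subset_Ioi_self
  set Bad : Set (sphere (0:E) 1) := {ω | ¬ H ω < ⊤} with hBad
  have hBadnull : σ Bad = 0 := by
    rw [← ae_iff] at *
    exact hae
  set N : Set (sphere (0:E) 1) := toMeasurable σ Bad with hN
  have hNmeas : MeasurableSet N := measurableSet_toMeasurable σ Bad
  have hNnull : σ N = 0 := by rw [hN, measure_toMeasurable]; exact hBadnull
  -- find a point where f ≠ 0 in the punctured ball
  obtain ⟨x₀, hx₀ball, hx₀f⟩ : ∃ x₀ ∈ ball (0:E) r, f x₀ ≠ 0 := by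
    by_contra hcon
    push_neg at hcon
    exact hfne (eventually_of_mem (ball_mem_nhds 0 hr0) hcon)
  have hx₀0 : x₀ ≠ 0 := fun h => hx₀f (h ▸ hf0)
  set W : Set E := U \ {0} with hW
  have hWopen : IsOpen W := hUopen.sdiff (isClosed_singleton (x := (0:E)))
  have hx₀W : x₀ ∈ W := ⟨⟨hx₀ball, hballV hx₀ball, by simpa using hx₀f⟩, by simpa using hx₀0⟩
  have hWpos : 0 < μ W := hWopen.measure_pos μ ⟨x₀, hx₀W⟩
  -- W maps into N × univ under φ
  have hsub : (Subtype.val ⁻¹' W : Set ({0}ᶜ : Set E)) ⊆ φ ⁻¹' (N ×ˢ univ) := by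
    intro x hx
    have hx0 : (x:E) ≠ 0 := x.2
    have h8 : (φ x).1 ∈ Bad := by
      have hfx : f (x:E) ≠ 0 := by
        have := hx.1.2.2
        simpa using this
      have hnorm : ‖(x:E)‖ < r := by
        have := hx.1.1
        simpa [mem_ball, dist_eq_norm] using this
      have hgood : ∃ ρ : ℝ, 0 < ρ ∧ ρ < r ∧ f (ρ • (((φ x).1 : sphere (0:E) 1) : E)) ≠ 0 := by
        refine ⟨‖(x:E)‖, norm_pos_iff.2 hx0, hnorm, ?_⟩
        have : (‖(x:E)‖ : ℝ) • (((φ x).1 : sphere (0:E) 1) : E) = (x:E) := by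
          simp only [hφ, homeomorphUnitSphereProd_apply_fst_coe]
          rw [smul_inv_smul₀ (norm_ne_zero_iff.2 hx0)]
        rw [this]
        exact hfx
      simp only [hBad, mem_setOf_eq, not_lt, top_le_iff]
      exact hGood _ hgood
    exact ⟨subset_toMeasurable σ Bad h8, mem_univ _⟩
  have : μ.comap (↑) (Subtype.val ⁻¹' W : Set ({0}ᶜ : Set E)) = 0 := by
    refine measure_mono_null hsub ?_
    rw [hMP.measure_preimage (hNmeas.prod MeasurableSet.univ).nullMeasurableSet]
    rw [Measure.prod_prod, hNnull, zero_mul]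
  have hWnull : μ W = 0 := by
    have h9 : (Subtype.val '' (Subtype.val ⁻¹' W : Set ({0}ᶜ : Set E))) = W := by
      rw [Subtype.image_preimage_coe]
      ext y
      simp only [hW, mem_inter_iff, mem_diff, mem_compl_iff, mem_singleton_iff]
      tauto
    rw [MeasurableEmbedding.comap_apply (MeasurableEmbedding.subtype_coe
      (measurableSet_singleton 0).compl)] at this
    rwa [h9] at this
  exact absurd hWnull hWpos.ne'

/-- If `f` is real analytic near `0` in `ℝⁿ` (`n ≥ 2`) with `f(0) = 0` and `f` not
identically zero near `0`, then for every sufficiently small ball `B` centered at `0`,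
`∫_B |∇f/f|ⁿ dV = ∞` (i.e. the integrand is not integrable off the zero set). -/
theorem stmt_5 (n : ℕ) (hn : 2 ≤ n) (f : EuclideanSpace ℝ (Fin n) → ℝ)
    (V : Set (EuclideanSpace ℝ (Fin n))) (hV : IsOpen V)
    (h0V : (0 : EuclideanSpace ℝ (Fin n)) ∈ V)
    (hf : AnalyticOnNhd ℝ f V) (hf0 : f 0 = 0)
    (hfne : ¬ ∀ᶠ x in nhds (0 : EuclideanSpace ℝ (Fin n)), f x = 0) :
    ∃ R > (0 : ℝ), ∀ r : ℝ, 0 < r → r < R →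
      ¬ IntegrableOn
        (fun x => (‖gradient f x‖ / |f x|) ^ (n : ℝ))
        (ball (0 : EuclideanSpace ℝ (Fin n)) r \ {x | f x = 0}) := by
  exact aux_main n hn finrank_euclideanSpace_fin volume f V hV h0V hf hf0 hfne
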